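/- The functions e^{cx²}cos(x²), e^{cx²}sin(x²), and x¹ each satisfy the quasi-Einstein equation Hφ + φρ_s = 0 on M(c), where H is the Hessian with respect to ∇ and ρ_s = (1+c²)dx²⊗dx² is the symmetric Ricci tensor. -/

import Mathlib

noncomputable def e : Fin 2 → ℝ × ℝ
  | 0 => (1, 0)
  | 1 => (0, 1)

noncomputable def pd (i : Fin 2) (f : ℝ × ℝ → ℝ) (p : ℝ × ℝ) : ℝ :=
  fderiv ℝ f p (e i)

/-- Christoffel symbols of `M(c)`. -/
noncomputable def Γ (c : ℝ) (i j k : Fin 2) (p : ℝ × ℝ) : ℝ :=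
  if i = 1 ∧ j = 1 then (if k = 0 then (1 + c ^ 2) * p.1 else 2 * c) else 0

/-- The Hessian `(Hφ)_{ij} = ∂ᵢ∂ⱼφ − Σ_k Γ_{ij}^k ∂ₖφ`. -/
noncomputable def Hess (c : ℝ) (i j : Fin 2) (φ : ℝ × ℝ → ℝ) (p : ℝ × ℝ) : ℝ :=
  pd i (fun q => pd j φ q) p - ∑ k : Fin 2, Γ c i j k p * pd k φ p

/-- The symmetric Ricci tensor `ρ_s = (1+c²)dx²⊗dx²` of `M(c)`. -/
noncomputable def rhoS (c : ℝ) (i j : Fin 2) : ℝ :=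
  if i = 1 ∧ j = 1 then 1 + c ^ 2 else 0

/-- `φ` solves the quasi-Einstein equation `Hφ + φρ_s = 0` on `M(c)`. -/
def QuasiEinstein (c : ℝ) (φ : ℝ × ℝ → ℝ) : Prop :=
  ∀ i j : Fin 2, ∀ p : ℝ × ℝ, Hess c i j φ p + φ p * rhoS c i j = 0

lemma pd_comp_snd (g g' : ℝ → ℝ) (h : ∀ t, HasDerivAt g (g' t) t)
    (i : Fin 2) (p : ℝ × ℝ) :
    pd i (fun q : ℝ × ℝ => g q.2) p = if i = 1 then g' p.2 else 0 := by
  have hf : HasFDerivAt (fun q : ℝ × ℝ => g q.2)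
      (g' p.2 • ContinuousLinearMap.snd ℝ ℝ ℝ) p :=
    (h p.2).comp_hasFDerivAt p hasFDerivAt_snd
  rw [pd, hf.fderiv]
  fin_cases i <;> simp [e]

lemma pd_fst (i : Fin 2) (p : ℝ × ℝ) :
    pd i (fun q : ℝ × ℝ => q.1) p = if i = 0 then 1 else 0 := by
  rw [pd]
  have hf : HasFDerivAt (fun q : ℝ × ℝ => q.1)
      (ContinuousLinearMap.fst ℝ ℝ ℝ) p := hasFDerivAt_fst
  rw [hf.fderiv]
  fin_cases i <;> simp [e]

lemma pd_const (a : ℝ) (i : Fin 2) (p : ℝ × ℝ) :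
    pd i (fun _ : ℝ × ℝ => a) p = 0 := by
  simp [pd]

lemma qe_ode (c : ℝ) (g g' g'' : ℝ → ℝ)
    (h1 : ∀ t, HasDerivAt g (g' t) t) (h2 : ∀ t, HasDerivAt g' (g'' t) t)
    (hode : ∀ t, g'' t - 2 * c * g' t + (1 + c ^ 2) * g t = 0) :
    QuasiEinstein c (fun p => g p.2) := by
  intro i j p
  have hφ0 : (fun q : ℝ × ℝ => pd 0 (fun r : ℝ × ℝ => g r.2) q) = fun _ => (0 : ℝ) := by
    funext q; simpa using pd_comp_snd g g' h1 0 q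
  have hφ1 : (fun q : ℝ × ℝ => pd 1 (fun r : ℝ × ℝ => g r.2) q) = fun q : ℝ × ℝ => g' q.2 := by
    funext q; simpa using pd_comp_snd g g' h1 1 q
  fin_cases i <;> fin_cases j <;>
    simp [Hess, Γ, rhoS, Fin.sum_univ_two, hφ0, hφ1, pd_const,
      pd_comp_snd g g' h1, pd_comp_snd g' g'' h2] <;>
    linear_combination hode p.2

theorem quasiEinstein_solutions (c : ℝ) :
    QuasiEinstein c (fun p => Real.exp (c * p.2) * Real.cos p.2) ∧
    QuasiEinstein c (fun p => Real.exp (c * p.2) * Real.sin p.2) ∧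
    QuasiEinstein c (fun p => p.1) := by
  have hexp : ∀ t : ℝ, HasDerivAt (fun t => Real.exp (c * t)) (c * Real.exp (c * t)) t := by
    intro t
    simpa [mul_comm] using ((hasDerivAt_id t).const_mul c).exp
  refine ⟨?_, ?_, ?_⟩
  · refine qe_ode c (fun t => Real.exp (c * t) * Real.cos t) (fun t => Real.exp (c * t) * (c * Real.cos t - Real.sin t))
      (fun t => Real.exp (c * t) * ((c ^ 2 - 1) * Real.cos t - 2 * c * Real.sin t)) ?_ ?_ ?_
    · intro t
      have := (hexp t).fun_mul (Real.hasDerivAt_cos t)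
      exact this.congr_deriv (by ring)
    · intro t
      have := (hexp t).fun_mul (((Real.hasDerivAt_cos t).const_mul c).fun_sub (Real.hasDerivAt_sin t))
      exact this.congr_deriv (by ring)
    · intro t; ring
  · refine qe_ode c (fun t => Real.exp (c * t) * Real.sin t) (fun t => Real.exp (c * t) * (c * Real.sin t + Real.cos t))
      (fun t => Real.exp (c * t) * ((c ^ 2 - 1) * Real.sin t + 2 * c * Real.cos t)) ?_ ?_ ?_
    · intro t
      have := (hexp t).fun_mul (Real.hasDerivAt_sin t)
      exact this.congr_deriv (by ring)
    · intro t
      have := (hexp t).fun_mul (((Real.hasDerivAt_sin t).const_mul c).fun_add (Real.hasDerivAt_cos t))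
      exact this.congr_deriv (by ring)
    · intro t; ring
  · intro i j p
    have hφ0 : (fun q : ℝ × ℝ => pd 0 (fun r : ℝ × ℝ => r.1) q) = fun _ => (1 : ℝ) := by
      funext q; simpa using pd_fst 0 q
    have hφ1 : (fun q : ℝ × ℝ => pd 1 (fun r : ℝ × ℝ => r.1) q) = fun _ => (0 : ℝ) := by
      funext q; simpa using pd_fst 1 q
    fin_cases i <;> fin_cases j <;>
      simp [Hess, Γ, rhoS, Fin.sum_univ_two, hφ0, hφ1, pd_const, pd_fst] <;> ring
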